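/- arXiv:1412.0783 — 2 statements merged into one kernel-verified Lean document; each statement's English description precedes it below -/
import Mathlib

section
/- Computable formula for W(P;μ): for a subgroup P ⊆ ℤ_b^{s×n}, W(P;μ)² = −1 + |P|^{-1} ∑_{B∈P} ∏_{i=1}^s ∏_{j=1}^n (1 + η(b_{i,j}) b^{−2j}), where μ is the Dick weight μ(A) = ∑_{i,j} j δ(a_{i,j}), W(P;μ)² = ∑_{A ∈ P^⊥\{0}} b^{−2μ(A)}, η(0) = b−1 and η(c) = −1 for c ≠ 0. -/
open scoped Classical
open Finset

section InversionAux

variable {b s n : ℕ}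

private noncomputable def dw (b : ℕ) : ℂ := Complex.exp (2 * Real.pi * Complex.I / b)

private def pe (A B : Matrix (Fin s) (Fin n) (ZMod b)) : ℕ :=
  ∑ i : Fin s, ∑ j : Fin n, (A i j).val * (B i j).val

private lemma dw_prim (hb : 2 ≤ b) : IsPrimitiveRoot (dw b) b :=
  Complex.isPrimitiveRoot_exp b (by omega)

private lemma dw_pow_b (hb : 2 ≤ b) : dw b ^ b = 1 := (dw_prim hb).pow_eq_one

private lemma pe_cast [NeZero b] (A B : Matrix (Fin s) (Fin n) (ZMod b)) :
    ((pe A B : ℕ) : ZMod b) = ∑ i : Fin s, ∑ j : Fin n, A i j * B i j := by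
  simp [pe, ZMod.natCast_val]

private lemma dw_pe_add [NeZero b] (hb : 2 ≤ b) (A B C : Matrix (Fin s) (Fin n) (ZMod b)) :
    dw b ^ pe A (B + C) = dw b ^ pe A B * dw b ^ pe A C := by
  rw [← pow_add, pow_eq_pow_mod (pe A (B + C)) (dw_pow_b hb),
    pow_eq_pow_mod (pe A B + pe A C) (dw_pow_b hb)]
  congr 1
  have : ((pe A (B + C) : ℕ) : ZMod b) = ((pe A B + pe A C : ℕ) : ZMod b) := by
    push_cast [pe_cast]
    simp [Matrix.add_apply, mul_add, Finset.sum_add_distrib]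
  exact (ZMod.natCast_eq_natCast_iff' _ _ _).mp this

private lemma zmod_sum_val [NeZero b] (f : ℕ → ℂ) :
    ∑ a : ZMod b, f a.val = ∑ k ∈ Finset.range b, f k := by
  refine Finset.sum_nbij' (fun a => a.val) (fun k => (k : ZMod b)) ?_ ?_ ?_ ?_ ?_
  · intro a _; exact Finset.mem_range.mpr (ZMod.val_lt a)
  · intro k _; exact Finset.mem_univ _
  · intro a _; exact ZMod.natCast_rightInverse a
  · intro k hk; exact ZMod.val_cast_of_lt (Finset.mem_range.mp hk)
  · intro a _; rfl

private lemma Tsum [NeZero b] (hb : 2 ≤ b) (c : ZMod b) :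
    ∑ a : ZMod b, dw b ^ (a.val * c.val) = if c = 0 then (b : ℂ) else 0 := by
  have hrw : ∀ a : ZMod b, dw b ^ (a.val * c.val) = (dw b ^ c.val) ^ a.val := by
    intro a; rw [← pow_mul, mul_comm]
  simp only [hrw]
  rw [zmod_sum_val (f := fun k => (dw b ^ c.val) ^ k)]
  by_cases hc : c = 0
  · simp [hc]
  · have hvz : c.val ≠ 0 := fun h => hc ((ZMod.val_eq_zero c).mp h)
    have hz1 : dw b ^ c.val ≠ 1 := fun h =>
      Nat.not_dvd_of_pos_of_lt (Nat.pos_of_ne_zero hvz) (ZMod.val_lt c)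
        (((dw_prim hb).pow_eq_one_iff_dvd _).mp h)
    have hzb : (dw b ^ c.val) ^ b = 1 := by
      rw [← pow_mul, mul_comm, pow_mul, (dw_prim hb).pow_eq_one, one_pow]
    rw [geom_sum_eq hz1 b, hzb]
    simp [hc]

private lemma entry_sum [NeZero b] (hb : 2 ≤ b) (c : ZMod b) (r : ℂ) :
    ∑ a : ZMod b, (if a = 0 then (1 : ℂ) else r) * dw b ^ (a.val * c.val)
      = 1 + (if c = 0 then (b : ℂ) - 1 else -1) * r := by
  have split : ∀ a : ZMod b,
      (if a = 0 then (1 : ℂ) else r) * dw b ^ (a.val * c.val)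
        = r * dw b ^ (a.val * c.val)
          + (if a = 0 then (1 : ℂ) - r else 0) * dw b ^ (a.val * c.val) := by
    intro a; by_cases h : a = 0 <;> simp [h]
  simp only [split]
  rw [Finset.sum_add_distrib, ← Finset.mul_sum, Tsum hb c]
  have : ∑ a : ZMod b, (if a = 0 then (1 : ℂ) - r else 0) * dw b ^ (a.val * c.val)
      = 1 - r := by
    rw [Finset.sum_eq_single 0]
    · simp
    · intro a _ ha; simp [ha]
    · intro h; exact absurd (Finset.mem_univ _) h
  rw [this]
  by_cases hc : c = 0 <;> simp [hc] <;> ring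

private lemma orth [NeZero b] (hb : 2 ≤ b) (P : AddSubgroup (Matrix (Fin s) (Fin n) (ZMod b)))
    (A : Matrix (Fin s) (Fin n) (ZMod b)) (h : ¬ ∀ B ∈ P, dw b ^ pe A B = 1) :
    ∑ B ∈ Finset.univ.filter (· ∈ P), dw b ^ pe A B = 0 := by
  push_neg at h
  obtain ⟨B₀, hB₀, hne⟩ := h
  set S := ∑ B ∈ Finset.univ.filter (· ∈ P), dw b ^ pe A B with hS
  have key : S = ∑ B ∈ Finset.univ.filter (· ∈ P), dw b ^ pe A (B + B₀) := by
    rw [hS]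
    refine (Finset.sum_nbij' (fun B => B + B₀) (fun B => B - B₀) ?_ ?_ ?_ ?_ ?_).symm
    · intro B hB
      simp only [Finset.mem_filter, Finset.mem_univ, true_and] at hB ⊢
      exact P.add_mem hB hB₀
    · intro B hB
      simp only [Finset.mem_filter, Finset.mem_univ, true_and] at hB ⊢
      exact P.sub_mem hB hB₀
    · intro B _; exact add_sub_cancel_right B B₀
    · intro B _; exact sub_add_cancel B B₀
    · intro B _; rfl
  have key2 : S = S * dw b ^ pe A B₀ := by
    conv_lhs => rw [key]
    simp only [dw_pe_add hb]
    rw [← Finset.sum_mul, ← hS]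
  have h2 : S * (1 - dw b ^ pe A B₀) = 0 := by linear_combination key2
  rcases mul_eq_zero.mp h2 with h3 | h3
  · exact h3
  · exact absurd (by linear_combination -h3) hne

set_option maxHeartbeats 1000000 in
private lemma factor [NeZero b] (r : Fin n → ℂ) (B : Matrix (Fin s) (Fin n) (ZMod b)) :
    ∑ A : Matrix (Fin s) (Fin n) (ZMod b),
      (∏ i : Fin s, ∏ j : Fin n, (if A i j = 0 then (1:ℂ) else r j)) * dw b ^ pe A B
      = ∏ i : Fin s, ∏ j : Fin n,
          ∑ a : ZMod b, (if a = 0 then (1:ℂ) else r j) * dw b ^ (a.val * (B i j).val) := by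
  have hA : ∀ A : Matrix (Fin s) (Fin n) (ZMod b),
      (∏ i : Fin s, ∏ j : Fin n, (if A i j = 0 then (1:ℂ) else r j)) * dw b ^ pe A B
      = ∏ i : Fin s, ∏ j : Fin n,
          ((if A i j = 0 then (1:ℂ) else r j) * dw b ^ ((A i j).val * (B i j).val)) := by
    intro A
    have h1 : dw b ^ pe A B
        = ∏ i : Fin s, ∏ j : Fin n, dw b ^ ((A i j).val * (B i j).val) := by
      rw [pe, ← Finset.prod_pow_eq_pow_sum]
      exact Finset.prod_congr rfl fun i _ => (Finset.prod_pow_eq_pow_sum _ _ _).symm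
    rw [h1, ← Finset.prod_mul_distrib]
    exact Finset.prod_congr rfl fun i _ => (Finset.prod_mul_distrib).symm
  simp only [hA]
  rw [← Fintype.sum_equiv (Matrix.of (m := Fin s) (n := Fin n) (α := ZMod b))
      (fun x => ∏ i : Fin s, ∏ j : Fin n,
        ((if x i j = 0 then (1:ℂ) else r j) * dw b ^ ((x i j).val * (B i j).val)))
      (fun A => ∏ i : Fin s, ∏ j : Fin n,
        ((if A i j = 0 then (1:ℂ) else r j) * dw b ^ ((A i j).val * (B i j).val)))
      (fun x => rfl)]
  rw [← Fintype.prod_sum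
      (f := fun (i : Fin s) (y : Fin n → ZMod b) => ∏ j : Fin n,
        ((if y j = 0 then (1:ℂ) else r j) * dw b ^ ((y j).val * (B i j).val)))]
  refine Finset.prod_congr rfl fun i _ => ?_
  exact (Fintype.prod_sum
    (f := fun (j : Fin n) (a : ZMod b) =>
      (if a = 0 then (1:ℂ) else r j) * dw b ^ (a.val * (B i j).val))).symm

private lemma zpow_sum_eq {ι : Type*} (x : ℂ) (hx : x ≠ 0) (t : Finset ι) (f : ι → ℤ) :
    x ^ (∑ i ∈ t, f i) = ∏ i ∈ t, x ^ f i := by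
  induction t using Finset.cons_induction with
  | empty => simp
  | cons a u ha ih => rw [Finset.sum_cons, Finset.prod_cons, zpow_add₀ hx, ih]

end InversionAux

/-- Computable formula for `W(P;μ)²` with the Dick weight `μ`. -/
theorem inversion_formula_dick_weight (b s n : ℕ) (hb : 2 ≤ b) [NeZero b]
    (P : AddSubgroup (Matrix (Fin s) (Fin n) (ZMod b))) :
    (∑ A ∈ Finset.univ.filter
        (fun A : Matrix (Fin s) (Fin n) (ZMod b) =>
          (∀ B ∈ P,
            Complex.exp (2 * Real.pi * Complex.I / b) ^
              (∑ i : Fin s, ∑ j : Fin n, (A i j).val * (B i j).val) = 1) ∧ A ≠ 0),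
        (b : ℝ) ^
          (-2 * ∑ i : Fin s, ∑ j : Fin n,
            ((j : ℕ) + 1 : ℤ) * (if A i j = 0 then 0 else 1)))
      = -1 + (1 / ((Finset.univ.filter (· ∈ P)).card : ℝ)) *
          ∑ B ∈ Finset.univ.filter (· ∈ P),
            ∏ i : Fin s, ∏ j : Fin n,
              (1 + (if B i j = 0 then (b : ℝ) - 1 else -1) *
                (b : ℝ) ^ (-2 * ((j : ℕ) + 1 : ℤ))) := by
  classical
  have hb0 : (b:ℂ) ≠ 0 := Nat.cast_ne_zero.mpr (by omega)
  set PF := Finset.univ.filter (· ∈ P) with hPF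
  set N := PF.card with hN
  have hNpos : 0 < N := Finset.card_pos.mpr ⟨0, by simp [hPF, P.zero_mem]⟩
  have hNC : (N:ℂ) ≠ 0 := Nat.cast_ne_zero.mpr hNpos.ne'
  set r : Fin n → ℂ := fun j => (b:ℂ) ^ (-2 * ((j:ℕ) + 1 : ℤ)) with hr
  set w : Matrix (Fin s) (Fin n) (ZMod b) → ℂ :=
    fun A => ∏ i : Fin s, ∏ j : Fin n, (if A i j = 0 then (1:ℂ) else r j) with hw
  set cond : Matrix (Fin s) (Fin n) (ZMod b) → Prop :=
    fun A => ∀ B ∈ P, dw b ^ pe A B = 1 with hcond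
  set D := Finset.univ.filter cond with hD
  have hind : ∀ A, ∑ B ∈ PF, dw b ^ pe A B = if cond A then (N:ℂ) else 0 := by
    intro A
    by_cases h : cond A
    · rw [if_pos h, Finset.sum_congr rfl
        (fun B hB => h B (by simpa [hPF] using hB))]
      simp [hN]
    · rw [if_neg h]; exact orth hb P A h
  have step : (N:ℂ) * ∑ A ∈ D, w A
      = ∑ B ∈ PF, ∏ i : Fin s, ∏ j : Fin n,
          (1 + (if B i j = 0 then (b:ℂ) - 1 else -1) * r j) := by
    calc (N:ℂ) * ∑ A ∈ D, w A
        = ∑ A ∈ D, (N:ℂ) * w A := Finset.mul_sum _ _ _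
      _ = ∑ A : Matrix (Fin s) (Fin n) (ZMod b), (if cond A then (N:ℂ) else 0) * w A := by
          rw [hD, Finset.sum_filter]
          refine Finset.sum_congr rfl fun A _ => ?_
          by_cases h : cond A
          · rw [if_pos h, if_pos h]
          · rw [if_neg h, if_neg h, zero_mul]
      _ = ∑ A : Matrix (Fin s) (Fin n) (ZMod b), (∑ B ∈ PF, dw b ^ pe A B) * w A :=
          Finset.sum_congr rfl fun A _ => by rw [hind A]
      _ = ∑ B ∈ PF, ∑ A : Matrix (Fin s) (Fin n) (ZMod b), w A * dw b ^ pe A B := by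
          simp only [Finset.sum_mul]
          rw [Finset.sum_comm]
          exact Finset.sum_congr rfl fun B _ =>
            Finset.sum_congr rfl fun A _ => mul_comm _ _
      _ = ∑ B ∈ PF, ∏ i : Fin s, ∏ j : Fin n,
            ∑ a : ZMod b, (if a = 0 then (1:ℂ) else r j) * dw b ^ (a.val * (B i j).val) :=
          Finset.sum_congr rfl fun B _ => factor r B
      _ = ∑ B ∈ PF, ∏ i : Fin s, ∏ j : Fin n,
            (1 + (if B i j = 0 then (b:ℂ) - 1 else -1) * r j) :=
          Finset.sum_congr rfl fun B _ => Finset.prod_congr rfl fun i _ =>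
            Finset.prod_congr rfl fun j _ => entry_sum hb (B i j) (r j)
  have h0D : (0 : Matrix (Fin s) (Fin n) (ZMod b)) ∈ D := by
    simp only [hD, Finset.mem_filter, Finset.mem_univ, true_and, hcond]
    intro B _
    have hz : pe (0 : Matrix (Fin s) (Fin n) (ZMod b)) B = 0 := by simp [pe]
    rw [hz, pow_zero]
  have hw0 : w 0 = 1 := by simp [hw]
  have hsplit : ∑ A ∈ D, w A = 1 + ∑ A ∈ D.erase 0, w A := by
    rw [← Finset.add_sum_erase _ _ h0D, hw0]
  have main : ∑ A ∈ Finset.univ.filter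
      (fun A : Matrix (Fin s) (Fin n) (ZMod b) => cond A ∧ A ≠ 0), w A
      = -1 + (1/(N:ℂ)) * ∑ B ∈ PF, ∏ i : Fin s, ∏ j : Fin n,
          (1 + (if B i j = 0 then (b:ℂ) - 1 else -1) * r j) := by
    have hFD : Finset.univ.filter
        (fun A : Matrix (Fin s) (Fin n) (ZMod b) => cond A ∧ A ≠ 0) = D.erase 0 := by
      ext A
      simp only [Finset.mem_filter, Finset.mem_univ, true_and, Finset.mem_erase, hD]
      tauto
    rw [hFD, ← step]
    have : (1/(N:ℂ)) * ((N:ℂ) * ∑ A ∈ D, w A) = ∑ A ∈ D, w A := by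
      field_simp
    rw [this, hsplit]
    ring
  -- descend to ℝ
  rw [← Complex.ofReal_inj]
  push_cast [Complex.ofReal_zpow, apply_ite Complex.ofReal]
  have hwA : ∀ A : Matrix (Fin s) (Fin n) (ZMod b),
      (b:ℂ) ^ (-2 * ∑ i : Fin s, ∑ j : Fin n,
        ((j:ℕ) + 1 : ℤ) * (if A i j = 0 then 0 else 1)) = w A := by
    intro A
    rw [hw]
    rw [Finset.mul_sum, zpow_sum_eq _ hb0]
    refine Finset.prod_congr rfl fun i _ => ?_
    rw [Finset.mul_sum, zpow_sum_eq _ hb0]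
    refine Finset.prod_congr rfl fun j _ => ?_
    by_cases h : A i j = 0 <;> simp [h, hr]
  have hdw : Complex.exp (2 * (Real.pi : ℂ) * Complex.I / (b : ℂ)) = dw b := rfl
  simp only [hdw]
  have hpe : ∀ A B : Matrix (Fin s) (Fin n) (ZMod b),
      (∑ i : Fin s, ∑ j : Fin n, (A i j).val * (B i j).val) = pe A B := fun _ _ => rfl
  simp only [hpe, hwA]
  simp only [hw, hr, hcond] at main
  exact main
end

section
/- If P ⊆ ℤ_2^{s×n} is a subgroup and f : [0,1]^s → ℝ satisfies |f̂_n(A)| ≤ M · 2^{−(μ(A)+h(A))} for all nonzero A ∈ ℤ_2^{s×n} (with M ≥ 0), then the root mean square error over random digital shifts satisfies sqrt(Var_{σ∈ℤ_2^{s×n}}[I_{P+σ}(f_n)]) ≤ M · W(P;μ+h), where W(P;μ+h)² = ∑_{A ∈ P^⊥\{0}} 2^{−2(μ(A)+h(A))}. -/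
open scoped Classical

namespace KHaux
variable {s n : ℕ}

abbrev G (s n : ℕ) := Matrix (Fin s) (Fin n) (ZMod 2)

noncomputable def e (A X : G s n) : ℝ :=
  (-1 : ℝ) ^ (∑ i : Fin s, ∑ j : Fin n, (A i j).val * (X i j).val)

lemma neg_one_pow_mod (m : ℕ) : (-1 : ℝ) ^ m = (-1) ^ (m % 2) := by
  conv_lhs => rw [← Nat.div_add_mod m 2]
  rw [pow_add, pow_mul]
  simp

lemma mod_of_cast {a b : ℕ} (h : (a : ZMod 2) = b) : a % 2 = b % 2 :=
  (ZMod.natCast_eq_natCast_iff a b 2).1 h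

lemma e_add_right (A X Y : G s n) : e A (X + Y) = e A X * e A Y := by
  unfold e
  rw [← pow_add, neg_one_pow_mod, neg_one_pow_mod (_ + _)]
  congr 1
  apply mod_of_cast
  push_cast [ZMod.natCast_val, ZMod.cast_id, Matrix.add_apply]
  simp [mul_add, Finset.sum_add_distrib]

lemma e_comm (A X : G s n) : e A X = e X A := by
  unfold e
  congr 1
  exact Finset.sum_congr rfl fun i _ => Finset.sum_congr rfl fun j _ => Nat.mul_comm _ _

lemma e_add_left (A B X : G s n) : e (A + B) X = e A X * e B X := by
  rw [e_comm, e_add_right, e_comm A, e_comm B]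

lemma e_zero_right (A : G s n) : e A 0 = 1 := by
  unfold e
  simp [Matrix.zero_apply]

lemma e_zero_left (X : G s n) : e 0 X = 1 := by rw [e_comm, e_zero_right]

lemma e_eq_one_or_neg_one (A X : G s n) : e A X = 1 ∨ e A X = -1 := by
  unfold e
  rcases Nat.even_or_odd (∑ i : Fin s, ∑ j : Fin n, (A i j).val * (X i j).val) with h | h
  · exact Or.inl (h.neg_one_pow)
  · exact Or.inr (h.neg_one_pow)

lemma add_self (X : G s n) : X + X = 0 := by
  ext i j
  simp [Matrix.add_apply, CharTwo.add_self_eq_zero]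

lemma sum_e_eq_zero {A : G s n} (hA : A ≠ 0) : ∑ X : G s n, e A X = 0 := by
  have : ∃ i j, A i j ≠ 0 := by
    by_contra h
    push_neg at h
    exact hA (by ext i j; simp [h])
  obtain ⟨i, j, hij⟩ := this
  set Y : G s n := fun i' j' => if i' = i ∧ j' = j then 1 else 0 with hY
  have hval : (A i j).val = 1 := by
    have h1 := ZMod.val_lt (A i j)
    have h2 : (A i j).val ≠ 0 := fun h => hij (by rwa [← ZMod.val_eq_zero])
    omega
  have heY : e A Y = -1 := by
    unfold e
    have : (∑ i' : Fin s, ∑ j' : Fin n, (A i' j').val * (Y i' j').val) = 1 := by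
      rw [hY]
      simp only [apply_ite ZMod.val, ZMod.val_one, ZMod.val_zero]
      rw [Finset.sum_eq_single i]
      · rw [Finset.sum_eq_single j]
        · simp [hval]
        · intro b _ hb; simp [hb]
        · simp
      · intro b _ hb
        apply Finset.sum_eq_zero
        intro c _
        simp [hb]
      · simp
    rw [this]; simp
  have hswap : ∑ X : G s n, e A X = ∑ X : G s n, e A (X + Y) :=
    (Fintype.sum_equiv (Equiv.addRight Y) (fun X => e A (X + Y)) (fun X => e A X)
      (fun X => rfl)).symm
  have : ∑ X : G s n, e A X = -∑ X : G s n, e A X := by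
    calc ∑ X : G s n, e A X = ∑ X : G s n, e A (X + Y) := hswap
    _ = ∑ X : G s n, e A X * (-1) := by
        apply Finset.sum_congr rfl; intro X _; rw [e_add_right, heY]
    _ = -∑ X : G s n, e A X := by simp [Finset.sum_neg_distrib]
  linarith

lemma sum_e_pair (A B : G s n) :
    ∑ σ : G s n, e A σ * e B σ =
      if A = B then (Fintype.card (G s n) : ℝ) else 0 := by
  have h1 : ∀ σ, e A σ * e B σ = e (A + B) σ := fun σ => (e_add_left A B σ).symm
  simp only [h1]
  by_cases h : A = B
  · subst h
    rw [if_pos rfl]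
    rw [add_self]
    simp [e_zero_left, Finset.card_univ]
  · rw [if_neg h]
    apply sum_e_eq_zero
    intro hAB
    apply h
    have : A = A + B + B := by rw [add_assoc, add_self, add_zero]
    rw [hAB, zero_add] at this
    exact this

end KHaux

namespace KHaux
variable {s n : ℕ}

lemma sum_e_pair' (X Y : G s n) :
    ∑ A : G s n, e A X * e A Y =
      if X = Y then (Fintype.card (G s n) : ℝ) else 0 := by
  have : ∀ A : G s n, e A X * e A Y = e X A * e Y A := by
    intro A; rw [e_comm A X, e_comm A Y]
  simp only [this]
  exact sum_e_pair X Y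

noncomputable def c (F : G s n → ℝ) (A : G s n) : ℝ :=
  (1 / (Fintype.card (G s n) : ℝ)) * ∑ X : G s n, F X * e A X

lemma inversion (F : G s n → ℝ) (Y : G s n) :
    F Y = ∑ A : G s n, c F A * e A Y := by
  have hN : (Fintype.card (G s n) : ℝ) ≠ 0 := by positivity
  unfold c
  have step : ∀ A : G s n,
      (1 / (Fintype.card (G s n) : ℝ) * ∑ X : G s n, F X * e A X) * e A Y
        = 1 / (Fintype.card (G s n) : ℝ) * ∑ X : G s n, F X * (e A X * e A Y) := by
    intro A
    rw [mul_assoc, Finset.sum_mul]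
    congr 1
    exact Finset.sum_congr rfl fun X _ => by ring
  simp only [step]
  rw [← Finset.mul_sum, Finset.sum_comm]
  have inner : ∀ X : G s n, (∑ A : G s n, F X * (e A X * e A Y))
      = F X * (if X = Y then (Fintype.card (G s n) : ℝ) else 0) := by
    intro X
    rw [← Finset.mul_sum, sum_e_pair']
  simp only [inner]
  simp only [mul_ite, mul_zero]
  rw [Finset.sum_ite_eq' Finset.univ Y (fun X => F X * (Fintype.card (G s n) : ℝ))]
  simp only [Finset.mem_univ, if_true]
  field_simp

end KHaux

namespace KHaux
variable {s n : ℕ}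

lemma sum_P (P : AddSubgroup (G s n)) (A : G s n) :
    ∑ X ∈ Finset.univ.filter (· ∈ P), e A X =
      if (∀ X ∈ P, e A X = 1) then ((Finset.univ.filter (· ∈ P)).card : ℝ) else 0 := by
  by_cases h : ∀ X ∈ P, e A X = 1
  · rw [if_pos h]
    rw [Finset.sum_congr rfl (fun X hX => h X (by simpa using hX))]
    simp
  · rw [if_neg h]
    push_neg at h
    obtain ⟨Y, hYP, hY1⟩ := h
    have hY : e A Y = -1 := (e_eq_one_or_neg_one A Y).resolve_left hY1
    have hswap : ∑ X ∈ Finset.univ.filter (· ∈ P), e A X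
        = ∑ X ∈ Finset.univ.filter (· ∈ P), e A (X + Y) := by
      refine Finset.sum_nbij' (fun X => X + Y) (fun X => X + Y) ?_ ?_ ?_ ?_ ?_
      · intro a ha
        simp only [Finset.mem_filter, Finset.mem_univ, true_and] at ha ⊢
        exact P.add_mem ha hYP
      · intro a ha
        simp only [Finset.mem_filter, Finset.mem_univ, true_and] at ha ⊢
        exact P.add_mem ha hYP
      · intro a _; show a + Y + Y = a; rw [add_assoc, add_self, add_zero]
      · intro a _; show a + Y + Y = a; rw [add_assoc, add_self, add_zero]
      · intro a _; show e A a = e A (a + Y + Y); rw [add_assoc, add_self, add_zero]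
    have : ∑ X ∈ Finset.univ.filter (· ∈ P), e A X
        = -∑ X ∈ Finset.univ.filter (· ∈ P), e A X := by
      calc ∑ X ∈ Finset.univ.filter (· ∈ P), e A X
          = ∑ X ∈ Finset.univ.filter (· ∈ P), e A (X + Y) := hswap
        _ = ∑ X ∈ Finset.univ.filter (· ∈ P), e A X * (-1) := by
            exact Finset.sum_congr rfl fun X _ => by rw [e_add_right, hY]
        _ = -∑ X ∈ Finset.univ.filter (· ∈ P), e A X := by simp
    linarith

end KHaux

namespace KHaux
variable {s n : ℕ}

lemma card_P_pos (P : AddSubgroup (G s n)) :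
    0 < (Finset.univ.filter (· ∈ P)).card := by
  apply Finset.card_pos.mpr
  exact ⟨0, by simp [P.zero_mem]⟩

lemma I_eq (P : AddSubgroup (G s n)) (F : G s n → ℝ) (σ : G s n) :
    (1 / ((Finset.univ.filter (· ∈ P)).card : ℝ)) *
        ∑ X ∈ Finset.univ.filter (· ∈ P), F (X + σ)
      = ∑ A ∈ Finset.univ.filter (fun A : G s n => ∀ X ∈ P, e A X = 1),
          c F A * e A σ := by
  have hp : ((Finset.univ.filter (· ∈ P)).card : ℝ) ≠ 0 := by
    exact_mod_cast (card_P_pos P).ne'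
  have step1 : ∑ X ∈ Finset.univ.filter (· ∈ P), F (X + σ)
      = ∑ A : G s n, (c F A * e A σ) * ∑ X ∈ Finset.univ.filter (· ∈ P), e A X := by
    calc ∑ X ∈ Finset.univ.filter (· ∈ P), F (X + σ)
        = ∑ X ∈ Finset.univ.filter (· ∈ P), ∑ A : G s n, c F A * e A (X + σ) :=
          Finset.sum_congr rfl fun X _ => inversion F (X + σ)
      _ = ∑ A : G s n, ∑ X ∈ Finset.univ.filter (· ∈ P), c F A * e A (X + σ) :=
          Finset.sum_comm
      _ = ∑ A : G s n, (c F A * e A σ) * ∑ X ∈ Finset.univ.filter (· ∈ P), e A X := by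
          apply Finset.sum_congr rfl
          intro A _
          rw [Finset.mul_sum]
          apply Finset.sum_congr rfl
          intro X _
          rw [e_add_right]
          ring
  rw [step1, Finset.mul_sum]
  rw [Finset.sum_filter]
  apply Finset.sum_congr rfl
  intro A _
  rw [sum_P]
  by_cases h : ∀ X ∈ P, e A X = 1
  · rw [if_pos h, if_pos h]
    field_simp
  · rw [if_neg h, if_neg h]
    ring

lemma variance_eq (T : Finset (G s n)) (g : G s n → ℝ) :
    (1 / (Fintype.card (G s n) : ℝ)) *
        ∑ σ : G s n, (∑ A ∈ T, g A * e A σ) ^ 2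
      = ∑ A ∈ T, (g A) ^ 2 := by
  have hN : (Fintype.card (G s n) : ℝ) ≠ 0 := by positivity
  have expand : ∀ σ : G s n, (∑ A ∈ T, g A * e A σ) ^ 2
      = ∑ A ∈ T, ∑ B ∈ T, (g A * g B) * (e A σ * e B σ) := by
    intro σ
    rw [pow_two, Finset.sum_mul_sum]
    exact Finset.sum_congr rfl fun A _ => Finset.sum_congr rfl fun B _ => by ring
  simp only [expand]
  rw [Finset.sum_comm]
  have inner : ∀ A ∈ T, (∑ σ : G s n, ∑ B ∈ T, (g A * g B) * (e A σ * e B σ))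
      = (g A) ^ 2 * (Fintype.card (G s n) : ℝ) := by
    intro A hA
    rw [Finset.sum_comm]
    have : ∀ B : G s n, (∑ σ : G s n, (g A * g B) * (e A σ * e B σ))
        = (g A * g B) * (if A = B then (Fintype.card (G s n) : ℝ) else 0) := by
      intro B
      rw [← Finset.mul_sum, sum_e_pair]
    rw [Finset.sum_congr rfl fun B _ => this B]
    simp only [mul_ite, mul_zero]
    rw [Finset.sum_ite_eq T A (fun B => g A * g B * (Fintype.card (G s n) : ℝ)), if_pos hA]
    ring
  rw [Finset.sum_congr rfl inner, ← Finset.sum_mul]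
  field_simp

end KHaux

namespace KHaux
variable {s n : ℕ}

lemma eC_eq (A X : G s n) :
    ((e A X : ℝ) : ℂ)
      = (-1 : ℂ) ^ (∑ i : Fin s, ∑ j : Fin n, (A i j).val * (X i j).val) := by
  unfold e
  push_cast
  ring

lemma orth_iff (P : AddSubgroup (G s n)) (A : G s n) :
    (∀ X ∈ P, (-1 : ℂ) ^ (∑ i : Fin s, ∑ j : Fin n, (A i j).val * (X i j).val) = 1)
      ↔ (∀ X ∈ P, e A X = 1) := by
  constructor <;> intro h X hX
  · have := h X hX
    rw [← eC_eq] at this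
    exact_mod_cast this
  · rw [← eC_eq, h X hX]
    norm_num

lemma cC_eq (F : G s n → ℝ) (A : G s n) :
    ((c F A : ℝ) : ℂ)
      = (1 / (Fintype.card (G s n) : ℂ)) *
          ∑ X : G s n, (F X : ℂ) *
            (-1 : ℂ) ^ (∑ i : Fin s, ∑ j : Fin n, (A i j).val * (X i j).val) := by
  unfold c
  push_cast
  congr 1
  apply Finset.sum_congr rfl
  intro X _
  rw [← eC_eq]

end KHaux

open KHaux

/-- Koksma–Hlawka type inequality for the root mean square error over `ℤ_2^{s×n}`
with the weight `μ + h` (Dick weight plus Hamming weight): if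
`|F̂(A)| ≤ M 2^{−(μ(A)+h(A))}` for all nonzero `A`, then
`sqrt(Var_σ[I_{P+σ}(F)]) ≤ M · W(P;μ+h)`. -/
theorem koksma_hlawka_rmse_mu_plus_h (s n : ℕ)
    (P : AddSubgroup (Matrix (Fin s) (Fin n) (ZMod 2)))
    (F : Matrix (Fin s) (Fin n) (ZMod 2) → ℝ) (M : ℝ) (hM : 0 ≤ M)
    (hF : ∀ A : Matrix (Fin s) (Fin n) (ZMod 2), A ≠ 0 →
      Norm.norm
          ((1 / (Fintype.card (Matrix (Fin s) (Fin n) (ZMod 2)) : ℂ)) *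
            ∑ X : Matrix (Fin s) (Fin n) (ZMod 2), (F X : ℂ) *
              (-1 : ℂ) ^ (∑ i : Fin s, ∑ j : Fin n, (A i j).val * (X i j).val))
        ≤ M * (2 : ℝ) ^
            (-((∑ i : Fin s, ∑ j : Fin n,
                  ((j : ℕ) + 1 : ℤ) * (if A i j = 0 then 0 else 1)) +
               ∑ i : Fin s, ∑ j : Fin n, (if A i j = 0 then 0 else 1)))) :
    Real.sqrt
        ((1 / (Fintype.card (Matrix (Fin s) (Fin n) (ZMod 2)) : ℝ)) *
          ∑ σ : Matrix (Fin s) (Fin n) (ZMod 2),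
            ((1 / ((Finset.univ.filter (· ∈ P)).card : ℝ)) *
                (∑ X ∈ Finset.univ.filter (· ∈ P), F (X + σ)) -
              (1 / (Fintype.card (Matrix (Fin s) (Fin n) (ZMod 2)) : ℝ)) *
                ∑ X : Matrix (Fin s) (Fin n) (ZMod 2), F X) ^ 2)
      ≤ M *
        Real.sqrt
          (∑ A ∈ Finset.univ.filter
              (fun A : Matrix (Fin s) (Fin n) (ZMod 2) =>
                (∀ X ∈ P,
                  (-1 : ℂ) ^
                    (∑ i : Fin s, ∑ j : Fin n, (A i j).val * (X i j).val) = 1) ∧ A ≠ 0),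
            (2 : ℝ) ^
              (-2 * ((∑ i : Fin s, ∑ j : Fin n,
                  ((j : ℕ) + 1 : ℤ) * (if A i j = 0 then 0 else 1)) +
                ∑ i : Fin s, ∑ j : Fin n, (if A i j = 0 then 0 else 1)))) := by
  classical
  set w : Matrix (Fin s) (Fin n) (ZMod 2) → ℤ := fun A =>
    (∑ i : Fin s, ∑ j : Fin n,
        ((j : ℕ) + 1 : ℤ) * (if A i j = 0 then 0 else 1)) +
      ∑ i : Fin s, ∑ j : Fin n, (if A i j = 0 then 0 else 1) with hw
  set S : Finset (G s n) :=
    Finset.univ.filter (fun A : G s n => ∀ X ∈ P, e A X = 1) with hS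
  set T : Finset (G s n) :=
    Finset.univ.filter
      (fun A : G s n =>
        (∀ X ∈ P,
          (-1 : ℂ) ^
            (∑ i : Fin s, ∑ j : Fin n, (A i j).val * (X i j).val) = 1) ∧ A ≠ 0) with hT
  have hTS : T = S.erase 0 := by
    ext A
    simp only [hT, hS, Finset.mem_erase, Finset.mem_filter, Finset.mem_univ, true_and,
      orth_iff P A]
    tauto
  -- bound on Fourier coefficients
  have hc : ∀ A : G s n, A ≠ 0 → |c F A| ≤ M * (2 : ℝ) ^ (-(w A)) := by
    intro A hA
    have := hF A hA
    rw [← cC_eq, Complex.norm_real, Real.norm_eq_abs] at this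
    exact this
  -- error representation
  have herr : ∀ σ : G s n,
      (1 / ((Finset.univ.filter (· ∈ P)).card : ℝ)) *
          (∑ X ∈ Finset.univ.filter (· ∈ P), F (X + σ)) -
        (1 / (Fintype.card (G s n) : ℝ)) * ∑ X : G s n, F X
      = ∑ A ∈ T, c F A * e A σ := by
    intro σ
    have h0S : (0 : G s n) ∈ S := by
      simp [hS, e_zero_left]
    have hc0 : c F 0 = (1 / (Fintype.card (G s n) : ℝ)) * ∑ X : G s n, F X := by
      unfold c
      simp [e_zero_left]
    rw [I_eq P F σ, ← hS, ← hc0, hTS]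
    rw [← Finset.add_sum_erase S (fun A => c F A * e A σ) h0S]
    rw [e_zero_left]
    ring
  -- variance identity
  have hvar : (1 / (Fintype.card (G s n) : ℝ)) *
      ∑ σ : G s n,
        ((1 / ((Finset.univ.filter (· ∈ P)).card : ℝ)) *
            (∑ X ∈ Finset.univ.filter (· ∈ P), F (X + σ)) -
          (1 / (Fintype.card (G s n) : ℝ)) * ∑ X : G s n, F X) ^ 2
      = ∑ A ∈ T, (c F A) ^ 2 := by
    rw [Finset.sum_congr rfl fun σ _ => by rw [herr σ]]
    exact variance_eq T (c F)
  rw [hvar]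
  -- pointwise bound on squares
  have hsq : ∀ A ∈ T, (c F A) ^ 2 ≤ M ^ 2 * (2 : ℝ) ^ (-2 * w A) := by
    intro A hAT
    have hA0 : A ≠ 0 := by
      rw [hTS] at hAT
      exact (Finset.mem_erase.mp hAT).1
    have h1 : |c F A| ≤ M * (2 : ℝ) ^ (-(w A)) := hc A hA0
    have h2 : (c F A) ^ 2 ≤ (M * (2 : ℝ) ^ (-(w A))) ^ 2 := by
      rw [← sq_abs]
      apply pow_le_pow_left₀ (abs_nonneg _) h1
    calc (c F A) ^ 2 ≤ (M * (2 : ℝ) ^ (-(w A))) ^ 2 := h2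
      _ = M ^ 2 * (2 : ℝ) ^ (-2 * w A) := by
          rw [mul_pow]
          congr 1
          rw [← zpow_natCast ((2:ℝ) ^ (-(w A))) 2, ← zpow_mul]
          congr 1
          ring
  calc Real.sqrt (∑ A ∈ T, (c F A) ^ 2)
      ≤ Real.sqrt (∑ A ∈ T, M ^ 2 * (2 : ℝ) ^ (-2 * w A)) :=
        Real.sqrt_le_sqrt (Finset.sum_le_sum hsq)
    _ = M * Real.sqrt (∑ A ∈ T, (2 : ℝ) ^ (-2 * w A)) := by
        rw [← Finset.mul_sum, Real.sqrt_mul (sq_nonneg M), Real.sqrt_sq hM]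
end
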